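/- Let m ≥ 1 and k ∈ {±1}^m with ∏_{j=1}^m k_j = 1, and let n ≥ 3. Then there exists a tridiagonal matrix A ∈ ℂ^{(nm−1)×(nm−1)} with zero diagonal and sub- and superdiagonal entries in {±1} such that for every j ∈ {1,…,n−1} with j ≠ n/2, every eigenvalue of the symbol matrix a^k(2πj/n) is an eigenvalue of A. -/
import Mathlib


open Complex Matrix

noncomputable def symb (m : ℕ) (k : ℕ → ℂ) (φ : ℝ) : Matrix (Fin m) (Fin m) ℂ :=
  Matrix.of fun r c =>
    (if (c : ℕ) = (r : ℕ) + 1 then 1 else 0) +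
    (if (r : ℕ) = (c : ℕ) + 1 then k c else 0) +
    (if (r : ℕ) = 0 ∧ (c : ℕ) = m - 1 then k c * Complex.exp (φ * Complex.I) else 0) +
    (if (r : ℕ) = m - 1 ∧ (c : ℕ) = 0 then Complex.exp (-φ * Complex.I) else 0)

lemma sum_if_coe {m : ℕ} (t : ℕ) (f : Fin m → ℂ) :
    (∑ c : Fin m, if (c : ℕ) = t then f c else 0) =
      if h : t < m then f ⟨t, h⟩ else 0 := by
  split_ifs with h
  · have h1 : (∑ c : Fin m, if (c : ℕ) = t then f c else 0)
        = ∑ c : Fin m, if c = ⟨t, h⟩ then f c else 0 := by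
      apply Finset.sum_congr rfl; intro c _
      apply if_congr _ rfl rfl; simp [Fin.ext_iff]
    rw [h1, Finset.sum_ite_eq' Finset.univ _ f]
    simp
  · exact Finset.sum_eq_zero fun c _ => if_neg (by have := c.isLt; omega)

noncomputable def extv (m : ℕ) (v : Fin m → ℂ) : ℕ → ℂ :=
  fun t => if h : t < m then v ⟨t, h⟩ else 0

lemma symb_row {m : ℕ} (hm : 0 < m) (k : ℕ → ℂ) (φ : ℝ) (lam : ℂ) (v : Fin m → ℂ)
    (hv : (symb m k φ).mulVec v = lam • v) (r : ℕ) (hr : r < m) :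
    (if r + 1 < m then extv m v (r + 1) else 0)
      + (if 1 ≤ r then k (r - 1) * extv m v (r - 1) else 0)
      + (if r = 0 then k (m - 1) * Complex.exp (φ * Complex.I) * extv m v (m - 1) else 0)
      + (if r = m - 1 then Complex.exp (-φ * Complex.I) * extv m v 0 else 0)
    = lam * extv m v r := by
  have h := congrFun hv ⟨r, hr⟩
  simp only [Matrix.mulVec, dotProduct, symb, Matrix.of_apply, Pi.smul_apply,
    smul_eq_mul] at h
  simp only [add_mul, Finset.sum_add_distrib] at h
  have e1 : (∑ c : Fin m, (if (c : ℕ) = r + 1 then (1:ℂ) else 0) * v c)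
      = if r + 1 < m then extv m v (r + 1) else 0 := by
    have h1 : ∀ c : Fin m, (if (c : ℕ) = r + 1 then (1:ℂ) else 0) * v c
        = if (c : ℕ) = r + 1 then v c else 0 := by
      intro c; split_ifs <;> simp
    rw [Finset.sum_congr rfl fun c _ => h1 c, sum_if_coe (r + 1) v]
    by_cases h2 : r + 1 < m
    · rw [dif_pos h2, if_pos h2]; unfold extv; rw [dif_pos h2]
    · rw [dif_neg h2, if_neg h2]
  have e2 : (∑ c : Fin m, (if r = (c : ℕ) + 1 then k c else 0) * v c)
      = if 1 ≤ r then k (r - 1) * extv m v (r - 1) else 0 := by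
    rcases Nat.eq_zero_or_pos r with rfl | hr1
    · simp
    · have h1 : ∀ c : Fin m, (if r = (c : ℕ) + 1 then k c else 0) * v c
          = if (c : ℕ) = r - 1 then k (r - 1) * v c else 0 := by
        intro c
        by_cases h2 : (c : ℕ) = r - 1
        · rw [if_pos (by omega), if_pos h2, h2]
        · rw [if_neg (by omega), if_neg h2, zero_mul]
      rw [Finset.sum_congr rfl fun c _ => h1 c,
        sum_if_coe (r - 1) (fun c => k (r - 1) * v c),
        dif_pos (show r - 1 < m by omega), if_pos (show 1 ≤ r from hr1)]
      unfold extv; rw [dif_pos (show r - 1 < m by omega)]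
  have e3 : (∑ c : Fin m, (if r = 0 ∧ (c : ℕ) = m - 1 then k (c : ℕ) * Complex.exp (φ * Complex.I) else 0) * v c)
      = if r = 0 then k (m - 1) * Complex.exp (φ * Complex.I) * extv m v (m - 1) else 0 := by
    by_cases hr0 : r = 0
    · subst hr0
      simp only [eq_self_iff_true, true_and, if_true]
      have h1 : ∀ c : Fin m, (if (c : ℕ) = m - 1 then k (c : ℕ) * Complex.exp (φ * Complex.I) else 0) * v c
          = if (c : ℕ) = m - 1 then k (m - 1) * Complex.exp (φ * Complex.I) * v c else 0 := by
        intro c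
        by_cases h2 : (c : ℕ) = m - 1
        · rw [if_pos h2, if_pos h2, h2]
        · rw [if_neg h2, if_neg h2, zero_mul]
      rw [Finset.sum_congr rfl fun c _ => h1 c,
        sum_if_coe (m - 1) (fun c => k (m - 1) * Complex.exp (φ * Complex.I) * v c),
        dif_pos (show m - 1 < m by omega)]
      unfold extv; rw [dif_pos (show m - 1 < m by omega)]
    · simp [hr0]
  have e4 : (∑ c : Fin m, (if r = m - 1 ∧ (c : ℕ) = 0 then Complex.exp (-φ * Complex.I) else 0) * v c)
      = if r = m - 1 then Complex.exp (-φ * Complex.I) * extv m v 0 else 0 := by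
    by_cases hrm : r = m - 1
    · subst hrm
      simp only [eq_self_iff_true, true_and, if_true]
      have h1 : ∀ c : Fin m, (if (c : ℕ) = 0 then Complex.exp (-φ * Complex.I) else 0) * v c
          = if (c : ℕ) = 0 then Complex.exp (-φ * Complex.I) * v c else 0 := by
        intro c; split_ifs with h2
        · rfl
        · rw [zero_mul]
      rw [Finset.sum_congr rfl fun c _ => h1 c,
        sum_if_coe 0 (fun c => Complex.exp (-φ * Complex.I) * v c), dif_pos hm]
      unfold extv; rw [dif_pos hm]
    · simp [hrm]
  rw [e1, e2, e3, e4] at h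
  have hx : extv m v r = v ⟨r, hr⟩ := by unfold extv; rw [dif_pos hr]
  rw [hx]
  exact h

noncomputable def bloch (m : ℕ) (φ : ℝ) (v : Fin m → ℂ) : ℕ → ℂ :=
  fun p => Complex.exp (-φ * Complex.I) ^ (p / m) * extv m v (p % m)

lemma bloch_rec {m : ℕ} (hm : 0 < m) (k : ℕ → ℂ) (φ : ℝ) (lam : ℂ) (v : Fin m → ℂ)
    (hv : (symb m k φ).mulVec v = lam • v) (p : ℕ) :
    bloch m φ v (p + 2) + k (p % m) * bloch m φ v p = lam * bloch m φ v (p + 1) := by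
  have hdiv : ∀ l r, r < m → (m * l + r) / m = l := fun l r h => by
    rw [Nat.mul_add_div hm, Nat.div_eq_of_lt h, add_zero]
  have hmod : ∀ l r, r < m → (m * l + r) % m = r := fun l r h => by
    rw [Nat.mul_add_mod, Nat.mod_eq_of_lt h]
  set z := Complex.exp (-φ * Complex.I) with hzdef
  have hz : z * Complex.exp (φ * Complex.I) = 1 := by
    rw [hzdef, ← Complex.exp_add, show -↑φ * Complex.I + ↑φ * Complex.I = 0 by ring,
      Complex.exp_zero]
  obtain ⟨l, r, hr, hp1⟩ : ∃ l r, r < m ∧ p + 1 = m * l + r :=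
    ⟨(p + 1) / m, (p + 1) % m, Nat.mod_lt _ hm, (Nat.div_add_mod (p+1) m).symm⟩
  have key := symb_row hm k φ lam v hv r hr
  rw [← hzdef] at key
  have b2 : bloch m φ v (p + 2) = z ^ l * ((if r + 1 < m then extv m v (r + 1) else 0)
      + (if r = m - 1 then z * extv m v 0 else 0)) := by
    by_cases hc : r + 1 < m
    · have hp2 : p + 2 = m * l + (r + 1) := by omega
      rw [if_pos hc, if_neg (by omega), add_zero]
      show z ^ ((p+2)/m) * extv m v ((p+2)%m) = _
      rw [hp2, hdiv l (r+1) hc, hmod l (r+1) hc]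
    · have hrm : r = m - 1 := by omega
      have hp2 : p + 2 = m * (l + 1) + 0 := by rw [Nat.mul_add, Nat.mul_one]; omega
      rw [if_neg hc, if_pos hrm, zero_add]
      show z ^ ((p+2)/m) * extv m v ((p+2)%m) = _
      rw [hp2, hdiv (l+1) 0 hm, hmod (l+1) 0 hm, pow_succ]
      ring
  have b0 : k (p % m) * bloch m φ v p = z ^ l * ((if 1 ≤ r then k (r - 1) * extv m v (r - 1) else 0)
      + (if r = 0 then k (m - 1) * Complex.exp (φ * Complex.I) * extv m v (m - 1) else 0)) := by
    by_cases hc : 1 ≤ r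
    · have hp0 : p = m * l + (r - 1) := by omega
      rw [if_pos hc, if_neg (by omega), add_zero]
      show k (p % m) * (z ^ (p / m) * extv m v (p % m)) = _
      rw [hp0, hdiv l (r-1) (by omega), hmod l (r-1) (by omega)]
      ring
    · have hr0 : r = 0 := by omega
      have hl : 1 ≤ l := by
        rcases Nat.eq_zero_or_pos l with h | h
        · rw [h, Nat.mul_zero, Nat.zero_add] at hp1; omega
        · exact h
      obtain ⟨l', rfl⟩ : ∃ l', l = l' + 1 := ⟨l - 1, by omega⟩
      rw [Nat.mul_add, Nat.mul_one] at hp1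
      have hp0 : p = m * l' + (m - 1) := by omega
      rw [if_neg hc, if_pos hr0, zero_add]
      show k (p % m) * (z ^ (p / m) * extv m v (p % m)) = _
      rw [hp0, hdiv l' (m-1) (by omega), hmod l' (m-1) (by omega), pow_succ]
      linear_combination (-(k (m-1) * extv m v (m-1) * z ^ l')) * hz
  have b1 : lam * bloch m φ v (p + 1) = z ^ l * (lam * extv m v r) := by
    show lam * (z ^ ((p+1)/m) * extv m v ((p+1)%m)) = _
    rw [hp1, hdiv l r hr, hmod l r hr]
    ring
  rw [b2, b0, b1, ← key]
  ring

lemma bloch_small {m : ℕ} (φ : ℝ) (v : Fin m → ℂ) (r : ℕ) (hr : r < m) :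
    bloch m φ v r = extv m v r := by
  show Complex.exp (-φ * Complex.I) ^ (r / m) * extv m v (r % m) = _
  rw [Nat.div_eq_of_lt hr, Nat.mod_eq_of_lt hr, pow_zero, one_mul]

lemma bloch_add_m {m : ℕ} (hm : 0 < m) (φ : ℝ) (v : Fin m → ℂ) (p : ℕ) :
    bloch m φ v (p + m) = Complex.exp (-φ * Complex.I) * bloch m φ v p := by
  simp only [bloch]
  rw [Nat.add_div_right p hm, Nat.add_mod_right p m, pow_succ]
  ring

lemma bloch_periodic {m : ℕ} (hm : 0 < m) (φ : ℝ) (v : Fin m → ℂ) (n : ℕ)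
    (hzn : Complex.exp (-φ * Complex.I) ^ n = 1) (p : ℕ) :
    bloch m φ v (p + n * m) = bloch m φ v p := by
  simp only [bloch]
  rw [show n * m = m * n from Nat.mul_comm n m, Nat.add_mul_div_left p n hm,
    Nat.add_mul_mod_self_left, pow_add, hzn, mul_one]

noncomputable def triA (N m : ℕ) (k : ℕ → ℂ) : Matrix (Fin N) (Fin N) ℂ :=
  Matrix.of fun i j =>
    (if (j : ℕ) = (i : ℕ) + 1 then 1 else 0) +
    (if (i : ℕ) = (j : ℕ) + 1 then k (((j : ℕ) + 1) % m) else 0)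

lemma triA_eig {N m : ℕ} (hm : 0 < m) (k : ℕ → ℂ) (lam : ℂ) (Z : ℕ → ℂ)
    (hrec : ∀ p, Z (p + 2) + k (p % m) * Z p = lam * Z (p + 1))
    (h0 : Z 0 = 0) (hN1 : Z (N + 1) = 0)
    (i0 : Fin N) (hZ : Z ((i0 : ℕ) + 1) ≠ 0) :
    ∃ x : Fin N → ℂ, x ≠ 0 ∧ (triA N m k).mulVec x = lam • x := by
  refine ⟨fun i => Z ((i : ℕ) + 1), ?_, ?_⟩
  · intro hx
    exact hZ (congrFun hx i0)
  · funext i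
    have e1 : (∑ j : Fin N, (if (j : ℕ) = (i : ℕ) + 1 then (1:ℂ) else 0) * Z ((j : ℕ) + 1))
        = if h : (i : ℕ) + 1 < N then Z ((i : ℕ) + 2) else 0 := by
      have h1 : ∀ j : Fin N, (if (j : ℕ) = (i : ℕ) + 1 then (1:ℂ) else 0) * Z ((j : ℕ) + 1)
          = if (j : ℕ) = (i : ℕ) + 1 then Z ((i : ℕ) + 2) else 0 := by
        intro j
        by_cases h2 : (j : ℕ) = (i : ℕ) + 1
        · rw [if_pos h2, if_pos h2, one_mul, h2]
        · rw [if_neg h2, if_neg h2, zero_mul]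
      rw [Finset.sum_congr rfl fun j _ => h1 j,
        sum_if_coe ((i : ℕ) + 1) (fun _ => Z ((i : ℕ) + 2))]
    have e2 : (∑ j : Fin N, (if (i : ℕ) = (j : ℕ) + 1 then k (((j : ℕ) + 1) % m) else 0) * Z ((j : ℕ) + 1))
        = if 1 ≤ (i : ℕ) then k ((i : ℕ) % m) * Z (i : ℕ) else 0 := by
      rcases Nat.eq_zero_or_pos (i : ℕ) with hi0 | hi1
      · rw [if_neg (by omega)]
        exact Finset.sum_eq_zero fun j _ => by rw [if_neg (by omega), zero_mul]
      · have h1 : ∀ j : Fin N, (if (i : ℕ) = (j : ℕ) + 1 then k (((j : ℕ) + 1) % m) else 0) * Z ((j : ℕ) + 1)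
            = if (j : ℕ) = (i : ℕ) - 1 then k ((i : ℕ) % m) * Z (i : ℕ) else 0 := by
          intro j
          by_cases h2 : (j : ℕ) = (i : ℕ) - 1
          · rw [if_pos (by omega), if_pos h2, show (j : ℕ) + 1 = (i : ℕ) by omega]
          · rw [if_neg (by omega), if_neg h2, zero_mul]
        rw [Finset.sum_congr rfl fun j _ => h1 j,
          sum_if_coe ((i : ℕ) - 1) (fun _ => k ((i : ℕ) % m) * Z (i : ℕ)),
          dif_pos (show (i : ℕ) - 1 < N by have := i.isLt; omega),
          if_pos (show 1 ≤ (i : ℕ) from hi1)]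
    have expand : (triA N m k).mulVec (fun j => Z ((j : ℕ) + 1)) i
        = (if h : (i : ℕ) + 1 < N then Z ((i : ℕ) + 2) else 0)
          + (if 1 ≤ (i : ℕ) then k ((i : ℕ) % m) * Z (i : ℕ) else 0) := by
      simp only [Matrix.mulVec, dotProduct, triA, Matrix.of_apply, add_mul,
        Finset.sum_add_distrib]
      rw [e1, e2]
    rw [expand]
    have hr := hrec (i : ℕ)
    have hiN : (i : ℕ) < N := i.isLt
    show _ = lam * Z ((i : ℕ) + 1)
    by_cases h1 : (i : ℕ) + 1 < N
    · rw [dif_pos h1]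
      rcases Nat.eq_zero_or_pos (i : ℕ) with hi0 | hi1
      · rw [if_neg (by omega), add_zero, hi0]
        have h := hrec 0
        rw [h0, mul_zero, add_zero] at h
        exact h
      · rw [if_pos (show 1 ≤ (i : ℕ) from hi1)]; exact hr
    · rw [dif_neg h1]
      have hz2 : Z ((i : ℕ) + 2) = 0 := by
        rw [show (i : ℕ) + 2 = N + 1 by omega, hN1]
      rw [hz2, zero_add] at hr
      rcases Nat.eq_zero_or_pos (i : ℕ) with hi0 | hi1
      · rw [if_neg (by omega), add_zero, hi0]
        rw [hi0, h0, mul_zero] at hr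
        exact hr
      · rw [if_pos (show 1 ≤ (i : ℕ) from hi1), zero_add]; exact hr

lemma det_vec {m : ℕ} (M : Matrix (Fin m) (Fin m) ℂ) (lam : ℂ)
    (h : (algebraMap ℂ (Matrix (Fin m) (Fin m) ℂ) lam - M).det = 0) :
    ∃ v, v ≠ 0 ∧ M.mulVec v = lam • v := by
  obtain ⟨v, hv0, hv⟩ := (Matrix.exists_mulVec_eq_zero_iff).mpr h
  refine ⟨v, hv0, ?_⟩
  rw [Matrix.sub_mulVec] at hv
  have ha : (algebraMap ℂ (Matrix (Fin m) (Fin m) ℂ) lam).mulVec v = lam • v := by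
    rw [Algebra.algebraMap_eq_smul_one, Matrix.smul_mulVec, Matrix.one_mulVec]
  rw [ha] at hv
  exact ((sub_eq_zero.mp hv)).symm

lemma spec_det {m : ℕ} (M : Matrix (Fin m) (Fin m) ℂ) (lam : ℂ)
    (h : lam ∈ spectrum ℂ M) :
    (algebraMap ℂ (Matrix (Fin m) (Fin m) ℂ) lam - M).det = 0 := by
  have h1 := spectrum.mem_iff.mp h
  by_contra hd
  exact h1 ((Matrix.isUnit_iff_isUnit_det _).mpr (isUnit_iff_ne_zero.mpr hd))

noncomputable def dvec (k : ℕ → ℂ) (t : ℕ) : ℂ := ∏ i ∈ Finset.range t, k i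

lemma symb_transpose_sim {m : ℕ} (hm : 0 < m) (k : ℕ → ℂ)
    (hk : ∀ i < m, k i = 1 ∨ k i = -1)
    (hprod : ∏ j ∈ Finset.range m, k j = 1) (φ : ℝ) :
    (Matrix.diagonal fun r : Fin m => dvec k r) * (symb m k φ)ᵀ
        * (Matrix.diagonal fun r : Fin m => dvec k r) = symb m k (-φ) := by
  have hk2 : ∀ i < m, k i * k i = 1 := by
    intro i hi; rcases hk i hi with h | h <;> rw [h] <;> norm_num
  have hd2 : ∀ t, t ≤ m → dvec k t * dvec k t = 1 := by
    intro t ht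
    rw [dvec, ← Finset.prod_mul_distrib]
    apply Finset.prod_eq_one
    intro i hi
    exact hk2 i (lt_of_lt_of_le (Finset.mem_range.mp hi) ht)
  have hsucc : ∀ t, dvec k (t + 1) = dvec k t * k t := fun t => Finset.prod_range_succ k t
  have hdm : dvec k m = 1 := hprod
  have hdm1 : dvec k (m - 1) = k (m - 1) := by
    have h1 : dvec k (m - 1) * k (m - 1) = 1 := by
      rw [← hsucc (m - 1), show m - 1 + 1 = m by omega, hdm]
    have h2 := hk2 (m - 1) (by omega)
    calc dvec k (m - 1) = dvec k (m - 1) * (k (m - 1) * k (m - 1)) := by rw [h2, mul_one]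
    _ = (dvec k (m - 1) * k (m - 1)) * k (m - 1) := by ring
    _ = k (m - 1) := by rw [h1, one_mul]
  have hd0 : dvec k 0 = 1 := rfl
  apply Matrix.ext
  intro r c
  rw [Matrix.mul_diagonal, Matrix.diagonal_mul, Matrix.transpose_apply]
  simp only [symb, Matrix.of_apply]
  have hcast1 : ((-φ : ℝ) : ℂ) = -(φ : ℂ) := by push_cast; ring
  rw [hcast1, neg_neg]
  have g1 : dvec k (r : ℕ) * (if (r : ℕ) = (c : ℕ) + 1 then (1:ℂ) else 0) * dvec k (c : ℕ)
      = (if (r : ℕ) = (c : ℕ) + 1 then k (c : ℕ) else 0) := by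
    split_ifs with h
    · rw [show dvec k (r : ℕ) = dvec k (c : ℕ) * k (c : ℕ) by rw [h, hsucc]]
      linear_combination k (c : ℕ) * hd2 (c : ℕ) (le_of_lt c.isLt)
    · ring
  have g2 : dvec k (r : ℕ) * (if (c : ℕ) = (r : ℕ) + 1 then k (r : ℕ) else 0) * dvec k (c : ℕ)
      = (if (c : ℕ) = (r : ℕ) + 1 then (1:ℂ) else 0) := by
    split_ifs with h
    · rw [show dvec k (c : ℕ) = dvec k (r : ℕ) * k (r : ℕ) by rw [h, hsucc]]
      have ha := hd2 (r : ℕ) (le_of_lt r.isLt)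
      have hb := hk2 (r : ℕ) r.isLt
      linear_combination (k (r : ℕ) * k (r : ℕ)) * ha + hb
    · ring
  have g3 : dvec k (r : ℕ) * (if (c : ℕ) = 0 ∧ (r : ℕ) = m - 1 then k (r : ℕ) * Complex.exp (φ * Complex.I) else 0) * dvec k (c : ℕ)
      = (if (r : ℕ) = m - 1 ∧ (c : ℕ) = 0 then Complex.exp (φ * Complex.I) else 0) := by
    split_ifs with h h2 h2
    · obtain ⟨hc0, hrm⟩ := h
      rw [hc0, hrm, hd0, hdm1, mul_one]
      linear_combination Complex.exp (φ * Complex.I) * hk2 (m - 1) (by omega)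
    · exact absurd ⟨h.2, h.1⟩ h2
    · exact absurd ⟨h2.2, h2.1⟩ h
    · ring
  have g4 : dvec k (r : ℕ) * (if (c : ℕ) = m - 1 ∧ (r : ℕ) = 0 then Complex.exp (-φ * Complex.I) else 0) * dvec k (c : ℕ)
      = (if (r : ℕ) = 0 ∧ (c : ℕ) = m - 1 then k (c : ℕ) * Complex.exp (-φ * Complex.I) else 0) := by
    split_ifs with h h2 h2
    · obtain ⟨hcm, hr0⟩ := h
      rw [hcm, hr0, hd0, hdm1, one_mul]
      ring
    · exact absurd ⟨h.2, h.1⟩ h2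
    · exact absurd ⟨h2.2, h2.1⟩ h
    · ring
  linear_combination g1 + g2 + g3 + g4

lemma spec_neg {m : ℕ} (hm : 0 < m) (k : ℕ → ℂ)
    (hk : ∀ i < m, k i = 1 ∨ k i = -1)
    (hprod : ∏ j ∈ Finset.range m, k j = 1) (φ : ℝ) (lam : ℂ)
    (h : lam ∈ spectrum ℂ (symb m k φ)) :
    ∃ w, w ≠ 0 ∧ (symb m k (-φ)).mulVec w = lam • w := by
  set D := Matrix.diagonal fun r : Fin m => dvec k (r : ℕ) with hD
  have hDD : D * D = 1 := by
    rw [hD, Matrix.diagonal_mul_diagonal]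
    have : ∀ r : Fin m, dvec k (r : ℕ) * dvec k (r : ℕ) = 1 := by
      intro r
      have hk2 : ∀ i < m, k i * k i = 1 := by
        intro i hi; rcases hk i hi with h' | h' <;> rw [h'] <;> norm_num
      rw [dvec, ← Finset.prod_mul_distrib]
      exact Finset.prod_eq_one fun i hi =>
        hk2 i (lt_of_lt_of_le (Finset.mem_range.mp hi) (le_of_lt r.isLt))
    simp only [this]
    rfl
  have hsim := symb_transpose_sim hm k hk hprod φ
  rw [← hD] at hsim
  apply det_vec
  have key : algebraMap ℂ (Matrix (Fin m) (Fin m) ℂ) lam - symb m k (-φ)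
      = D * (algebraMap ℂ (Matrix (Fin m) (Fin m) ℂ) lam - symb m k φ)ᵀ * D := by
    rw [Matrix.transpose_sub, Matrix.mul_sub, Matrix.sub_mul, hsim]
    congr 1
    rw [Algebra.algebraMap_eq_smul_one, Matrix.transpose_smul, Matrix.transpose_one]
    rw [Matrix.mul_smul, Matrix.mul_one, Matrix.smul_mul, hDD]
  rw [key, Matrix.det_mul, Matrix.det_mul, Matrix.det_transpose]
  have hdet := spec_det (symb m k φ) lam h
  rw [hdet]
  ring

lemma exp_pow_n (n : ℕ) (t : ℤ) (s : ℝ) (hs : s * n = 2 * Real.pi * t) :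
    Complex.exp ((s:ℂ) * Complex.I) ^ n = 1 := by
  rw [← Complex.exp_nat_mul]
  have hsc : ((s * n : ℝ) : ℂ) = ((2 * Real.pi * t : ℝ) : ℂ) := congrArg Complex.ofReal hs
  push_cast at hsc
  have : (n:ℂ) * ((s:ℂ) * Complex.I) = ((t:ℤ):ℂ) * (2 * (Real.pi:ℂ) * Complex.I) := by
    push_cast
    linear_combination Complex.I * hsc
  rw [this, Complex.exp_int_mul_two_pi_mul_I]

lemma phase_ne (n j : ℕ) (hn : 3 ≤ n) (hj1 : 1 ≤ j) (hj2 : j ≤ n - 1) (h2j : 2 * j ≠ n)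
    (φ : ℝ) (hs : φ * n = 2 * Real.pi * j) :
    Complex.exp (-(φ:ℂ) * Complex.I) ≠ Complex.exp ((φ:ℂ) * Complex.I) := by
  intro he
  have h1 : Complex.exp ((φ:ℂ) * Complex.I) * Complex.exp (-(φ:ℂ) * Complex.I) = 1 := by
    rw [← Complex.exp_add, show (φ:ℂ) * Complex.I + -(φ:ℂ) * Complex.I = 0 by ring,
      Complex.exp_zero]
  have h2 : Complex.exp ((φ:ℂ) * Complex.I + (φ:ℂ) * Complex.I) = 1 := by
    rw [Complex.exp_add]
    calc Complex.exp ((φ:ℂ) * Complex.I) * Complex.exp ((φ:ℂ) * Complex.I)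
        = Complex.exp ((φ:ℂ) * Complex.I) * Complex.exp (-(φ:ℂ) * Complex.I) := by rw [he]
      _ = 1 := h1
  obtain ⟨t, ht⟩ := Complex.exp_eq_one_iff.mp h2
  have ht2 : ((2 * φ : ℝ) : ℂ) * Complex.I = ((t:ℂ) * (2 * (Real.pi:ℂ))) * Complex.I := by
    push_cast
    linear_combination ht
  have ht3 := mul_right_cancel₀ Complex.I_ne_zero ht2
  have hr : (2 * φ : ℝ) = (t:ℝ) * (2 * Real.pi) := by exact_mod_cast ht3
  have hjr : 2 * Real.pi * ((2:ℝ) * j) = 2 * Real.pi * ((t:ℝ) * n) := by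
    linear_combination (n:ℝ) * hr + (-2 : ℝ) * hs
  have hjr2 : (2:ℝ) * j = (t:ℝ) * n := by
    apply mul_left_cancel₀ (show (2 * Real.pi : ℝ) ≠ 0 by positivity) hjr
  have hji : (2 * j : ℤ) = t * n := by exact_mod_cast hjr2
  have hb1 : (2:ℤ) ≤ 2 * (j:ℤ) := by exact_mod_cast (by omega : (2:ℕ) ≤ 2 * j)
  have hb2 : 2 * (j:ℤ) + 2 ≤ 2 * (n:ℤ) := by exact_mod_cast (by omega : 2 * j + 2 ≤ 2 * n)
  have hnz : (0:ℤ) < (n:ℤ) := by exact_mod_cast (by omega : 0 < n)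
  have ht1 : 1 ≤ t := by
    by_contra hc
    push_neg at hc
    have h5 : t * (n:ℤ) ≤ 0 * (n:ℤ) := mul_le_mul_of_nonneg_right (by omega) (le_of_lt hnz)
    rw [zero_mul] at h5
    omega
  have htle : t ≤ 1 := by
    by_contra hc
    push_neg at hc
    have h5 : 2 * (n:ℤ) ≤ t * (n:ℤ) := mul_le_mul_of_nonneg_right (by omega) (le_of_lt hnz)
    omega
  have ht1' : t = 1 := by omega
  rw [ht1', one_mul] at hji
  exact h2j (by exact_mod_cast hji)

/-- If `∏ⱼ kⱼ = 1` and `n ≥ 3`, there is a tridiagonal matrix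
`A ∈ ℂ^{(nm−1)×(nm−1)}` with zero diagonal and sub- and superdiagonal entries in `{±1}` such
that for every `j ∈ {1,…,n−1}` with `j ≠ n/2`, every eigenvalue of `a^k(2πj/n)` is an
eigenvalue of `A`. -/
theorem exists_sign_matrix_containing_symbol_eigenvalues
    (m : ℕ) (hm : 1 ≤ m) (k : ℕ → ℂ) (hk : ∀ i < m, k i = 1 ∨ k i = -1)
    (hprod : ∏ j ∈ Finset.range m, k j = 1)
    (n : ℕ) (hn : 3 ≤ n) :
    ∃ A : Matrix (Fin (n * m - 1)) (Fin (n * m - 1)) ℂ,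
      (∀ i j : Fin (n * m - 1),
        ((j : ℕ) = (i : ℕ) + 1 ∨ (i : ℕ) = (j : ℕ) + 1) → (A i j = 1 ∨ A i j = -1)) ∧
      (∀ i j : Fin (n * m - 1),
        ¬((j : ℕ) = (i : ℕ) + 1 ∨ (i : ℕ) = (j : ℕ) + 1) → A i j = 0) ∧
      ∀ j : ℕ, 1 ≤ j → j ≤ n - 1 → 2 * j ≠ n →
        ∀ lam ∈ spectrum ℂ (symb m k (2 * Real.pi * j / n)),
          ∃ x : Fin (n * m - 1) → ℂ, x ≠ 0 ∧ A.mulVec x = lam • x := by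
  have hm0 : 0 < m := hm
  have hnm3 : 3 ≤ n * m := le_trans hn (Nat.le_mul_of_pos_right n hm0)
  refine ⟨triA (n * m - 1) m k, ?_, ?_, ?_⟩
  · intro i j hij
    simp only [triA, Matrix.of_apply]
    rcases hij with h | h
    · left; rw [if_pos h, if_neg (by omega), add_zero]
    · rw [if_neg (by omega), if_pos h, zero_add]
      exact hk (((j : ℕ) + 1) % m) (Nat.mod_lt _ hm0)
  · intro i j hij
    push_neg at hij
    simp only [triA, Matrix.of_apply]
    rw [if_neg hij.1, if_neg hij.2, add_zero]
  · intro j hj1 hj2 h2j lam hlam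
    set φ : ℝ := 2 * Real.pi * j / n with hφ
    have hn0 : (n:ℝ) ≠ 0 := Nat.cast_ne_zero.mpr (by omega)
    have hφn : φ * n = 2 * Real.pi * j := by rw [hφ]; field_simp
    have hc2 : -(((-φ:ℝ)):ℂ) = ((φ:ℝ):ℂ) := by push_cast; ring
    have hzn1 : Complex.exp (-(φ:ℂ) * Complex.I) ^ n = 1 := by
      rw [show -((φ:ℝ):ℂ) = (((-φ:ℝ)):ℂ) by push_cast; ring]
      exact exp_pow_n n (-(j:ℤ)) (-φ) (by push_cast; linarith [hφn])
    have hzn2 : Complex.exp (-(((-φ:ℝ)):ℂ) * Complex.I) ^ n = 1 := by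
      rw [hc2]
      exact exp_pow_n n (j:ℤ) φ (by push_cast; linarith [hφn])
    obtain ⟨v, hv0, hv⟩ := det_vec _ lam (spec_det _ lam hlam)
    obtain ⟨w, hw0, hw⟩ := spec_neg hm0 k hk hprod φ lam hlam
    obtain ⟨r0, hr0v⟩ := Function.ne_iff.mp hv0
    replace hr0v : v r0 ≠ 0 := by simpa using hr0v
    have Xval : ∀ r : Fin m, bloch m φ v (r:ℕ) = v r := by
      intro r; rw [bloch_small φ v (r:ℕ) r.isLt]; simp [extv, r.isLt]
    have Yval : ∀ r : Fin m, bloch m (-φ) w (r:ℕ) = w r := by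
      intro r; rw [bloch_small (-φ) w (r:ℕ) r.isLt]; simp [extv, r.isLt]
    have X0 : bloch m φ v 0 = v ⟨0, hm0⟩ := Xval ⟨0, hm0⟩
    have Y0 : bloch m (-φ) w 0 = w ⟨0, hm0⟩ := Yval ⟨0, hm0⟩
    have recX := bloch_rec hm0 k φ lam v hv
    have recY := bloch_rec hm0 k (-φ) lam w hw
    have perX := bloch_periodic hm0 φ v n hzn1
    have perY := bloch_periodic hm0 (-φ) w n hzn2
    suffices hsuff : ∃ Z : ℕ → ℂ, (∀ p, Z (p + 2) + k (p % m) * Z p = lam * Z (p + 1)) ∧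
        (∀ p, Z (p + n * m) = Z p) ∧ Z 0 = 0 ∧ (∃ p, Z p ≠ 0) by
      obtain ⟨Z, hrec, hper, h0, p, hp⟩ := hsuff
      have perT : ∀ t q, Z (q + t * (n * m)) = Z q := by
        intro t
        induction t with
        | zero => intro q; simp
        | succ t ih =>
          intro q
          have e : q + (t + 1) * (n * m) = (q + t * (n * m)) + n * m := by ring
          rw [e, hper, ih]
      have hq : Z (p % (n * m)) ≠ 0 := by
        have e1 : p % (n * m) + (p / (n * m)) * (n * m) = p := by
          rw [Nat.mul_comm (p / (n * m)) (n * m)]; exact Nat.mod_add_div p (n * m)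
        rw [← e1] at hp
        rw [perT (p / (n * m)) (p % (n * m))] at hp
        exact hp
      have hqne : p % (n * m) ≠ 0 := by
        intro h; rw [h] at hq; exact hq h0
      have hqlt : p % (n * m) < n * m := Nat.mod_lt _ (by omega)
      refine triA_eig hm0 k lam Z hrec h0 ?_ ⟨p % (n * m) - 1, by omega⟩ ?_
      · rw [show (n * m - 1) + 1 = n * m by omega]
        have h1 := hper 0
        rw [Nat.zero_add] at h1
        rw [h1, h0]
      · show Z ((p % (n * m) - 1) + 1) ≠ 0
        rw [show p % (n * m) - 1 + 1 = p % (n * m) by omega]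
        exact hq
    by_cases hv00 : v ⟨0, hm0⟩ = 0
    · exact ⟨bloch m φ v, recX, perX, by rw [X0, hv00],
        ⟨(r0:ℕ), by rw [Xval r0]; exact hr0v⟩⟩
    · by_cases hw00 : w ⟨0, hm0⟩ = 0
      · obtain ⟨s0, hs0w⟩ := Function.ne_iff.mp hw0
        replace hs0w : w s0 ≠ 0 := by simpa using hs0w
        exact ⟨bloch m (-φ) w, recY, perY, by rw [Y0, hw00],
          ⟨(s0:ℕ), by rw [Yval s0]; exact hs0w⟩⟩
      · refine ⟨fun p => w ⟨0, hm0⟩ * bloch m φ v p - v ⟨0, hm0⟩ * bloch m (-φ) w p,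
          ?_, ?_, ?_, ?_⟩
        · intro p
          linear_combination w ⟨0, hm0⟩ * recX p - v ⟨0, hm0⟩ * recY p
        · intro p
          simp only
          rw [perX p, perY p]
        · simp only
          rw [X0, Y0]; ring
        · by_cases hZa : w ⟨0, hm0⟩ * v r0 - v ⟨0, hm0⟩ * w r0 = 0
          · refine ⟨(r0:ℕ) + m, ?_⟩
            simp only
            rw [bloch_add_m hm0 φ v (r0:ℕ), bloch_add_m hm0 (-φ) w (r0:ℕ), Xval r0, Yval r0]
            intro hzero
            have hfac : (Complex.exp (-(φ:ℂ) * Complex.I)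
                - Complex.exp (-(((-φ:ℝ)):ℂ) * Complex.I)) * (w ⟨0, hm0⟩ * v r0) = 0 := by
              linear_combination hzero - Complex.exp (-(((-φ:ℝ)):ℂ) * Complex.I) * hZa
            rcases mul_eq_zero.mp hfac with hz | hz
            · have hne := phase_ne n j hn hj1 hj2 h2j φ hφn
              rw [hc2] at hz
              exact hne (sub_eq_zero.mp hz)
            · rcases mul_eq_zero.mp hz with h | h
              · exact hw00 h
              · exact hr0v h
          · refine ⟨(r0:ℕ), ?_⟩
            simp only
            rw [Xval r0, Yval r0]
            exact hZa
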